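/- Let α > 1 and c > 0, and let (m_j)_{j≥1} be a nonincreasing sequence with 0 < m_j < 1 for all j and lim_{j→∞} j^α m_j = c. Then lim_{n→∞} n^{−1/α} ∑_{j=1}^∞ (1 − (1 − m_j)^n) = ∫_0^∞ (1 − exp(−c u^{−α})) du; in particular, ∑_{j=1}^∞ (1 − (1 − m_j)^n) = Θ(n^{1/α}) as n → ∞. -/

import Mathlib

open Filter Asymptotics

open MeasureTheory Set
open scoped ENNReal NNReal

private lemma stmt17_ttop {α u : ℝ} (hα : 0 < α) (hu : 0 < u) :
    Tendsto (fun n : ℕ => u * (n : ℝ) ^ (1/α)) atTop atTop :=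
  ((tendsto_rpow_atTop (by positivity)).comp tendsto_natCast_atTop_atTop).const_mul_atTop hu

private lemma stmt17_nm {α c u : ℝ} (hα : 1 < α) (hu : 0 < u) {m : ℕ → ℝ}
    (hlim : Tendsto (fun j : ℕ => (j : ℝ) ^ α * m j) atTop (nhds c)) :
    Tendsto (fun n : ℕ => (n : ℝ) * m ⌊u * (n : ℝ) ^ (1/α)⌋₊) atTop
      (nhds (c * u ^ (-α))) := by
  have hα0 : (0:ℝ) < α := lt_trans one_pos hα
  set t : ℕ → ℝ := fun n => u * (n:ℝ) ^ (1/α) with ht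
  have htop : Tendsto t atTop atTop := stmt17_ttop hα0 hu
  have hjtop : Tendsto (fun n => ⌊t n⌋₊) atTop atTop := tendsto_nat_floor_atTop.comp htop
  have hratio : Tendsto (fun n => (⌊t n⌋₊ : ℝ) / t n) atTop (nhds 1) :=
    tendsto_nat_floor_div_atTop.comp htop
  have hratio' : Tendsto (fun n => ((⌊t n⌋₊ : ℝ) / t n) ^ (-α)) atTop (nhds 1) := by
    simpa using hratio.rpow_const (Or.inl one_ne_zero)
  have h1 : Tendsto (fun n => ((⌊t n⌋₊:ℝ))^α * m ⌊t n⌋₊) atTop (nhds c) := hlim.comp hjtop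
  have hprod : Tendsto
      (fun n => ((⌊t n⌋₊:ℝ))^α * m ⌊t n⌋₊ * (((⌊t n⌋₊ : ℝ) / t n) ^ (-α)) * u ^ (-α))
      atTop (nhds (c * u ^ (-α))) := by
    simpa using (h1.mul hratio').mul_const (u ^ (-α))
  refine hprod.congr' ?_
  have hev1 : ∀ᶠ n : ℕ in atTop, 1 ≤ ⌊t n⌋₊ := hjtop.eventually (eventually_ge_atTop 1)
  have hev2 : ∀ᶠ n : ℕ in atTop, 1 ≤ n := eventually_ge_atTop 1
  filter_upwards [hev1, hev2] with n hj hn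
  have hn0 : (0:ℝ) < (n:ℝ) := by exact_mod_cast hn
  have htn : 0 < t n := by
    have : (0:ℝ) < (n:ℝ) ^ (1/α) := Real.rpow_pos_of_pos hn0 _
    exact mul_pos hu this
  have hjpos : (0:ℝ) < (⌊t n⌋₊ : ℝ) := by exact_mod_cast hj
  have hjne : ((⌊t n⌋₊:ℝ)) ^ α ≠ 0 := ne_of_gt (Real.rpow_pos_of_pos hjpos _)
  have htne : t n ^ (-α) ≠ 0 := ne_of_gt (Real.rpow_pos_of_pos htn _)
  have hune : u ^ (-α) ≠ 0 := ne_of_gt (Real.rpow_pos_of_pos hu _)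
  have hdiv : ((⌊t n⌋₊ : ℝ) / t n) ^ (-α) = (⌊t n⌋₊ : ℝ) ^ (-α) / t n ^ (-α) :=
    Real.div_rpow hjpos.le htn.le (-α)
  have hjinv : ((⌊t n⌋₊:ℝ)) ^ (-α) = (((⌊t n⌋₊:ℝ)) ^ α)⁻¹ := by
    rw [Real.rpow_neg hjpos.le]
  have htval : t n ^ (-α) = u ^ (-α) * ((n:ℝ))⁻¹ := by
    have h2 : ((n:ℝ) ^ (1/α)) ^ (-α) = ((n:ℝ))⁻¹ := by
      rw [← Real.rpow_mul (Nat.cast_nonneg n)]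
      have hee : (1/α) * (-α) = -1 := by field_simp
      rw [hee, Real.rpow_neg_one]
    simp only [ht]
    rw [Real.mul_rpow hu.le (Real.rpow_nonneg (Nat.cast_nonneg n) _), h2]
  rw [hdiv, hjinv, htval]
  field_simp
  ring

private lemma stmt17_pow {α c u : ℝ} (hα : 1 < α) (hu : 0 < u) {m : ℕ → ℝ}
    (hm : ∀ j, m j ∈ Set.Ioo (0 : ℝ) 1)
    (hlim : Tendsto (fun j : ℕ => (j : ℝ) ^ α * m j) atTop (nhds c)) :
    Tendsto (fun n : ℕ => (1 - m ⌊u * (n : ℝ) ^ (1/α)⌋₊) ^ n) atTop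
      (nhds (Real.exp (-(c * u ^ (-α))))) := by
  set j : ℕ → ℕ := fun n => ⌊u * (n : ℝ) ^ (1/α)⌋₊ with hj
  have hnm : Tendsto (fun n : ℕ => (n : ℝ) * m (j n)) atTop (nhds (c * u ^ (-α))) :=
    stmt17_nm hα hu hlim
  -- m (j n) → 0
  have hm0 : Tendsto (fun n : ℕ => m (j n)) atTop (nhds 0) := by
    have h1 : Tendsto (fun n : ℕ => ((n : ℝ) * m (j n)) * ((n:ℝ))⁻¹) atTop
        (nhds ((c * u ^ (-α)) * 0)) :=
      hnm.mul tendsto_inv_atTop_nhds_zero_nat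
    rw [mul_zero] at h1
    refine h1.congr' ?_
    filter_upwards [eventually_ge_atTop 1] with n hn
    have hn0 : ((n:ℝ)) ≠ 0 := by positivity
    field_simp
  -- slope of log at 1
  have hslope : Tendsto (fun y : ℝ => Real.log y / (y - 1)) (nhdsWithin 1 {(1:ℝ)}ᶜ)
      (nhds 1) := by
    have h := hasDerivAt_iff_tendsto_slope.mp (Real.hasDerivAt_log one_ne_zero)
    rw [show (1:ℝ)⁻¹ = 1 by norm_num] at h
    refine h.congr fun y => ?_
    simp [slope_def_field, Real.log_one]
  have hy : Tendsto (fun n : ℕ => 1 - m (j n)) atTop (nhdsWithin 1 {(1:ℝ)}ᶜ) := by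
    rw [tendsto_nhdsWithin_iff]
    constructor
    · simpa using tendsto_const_nhds.sub hm0
    · filter_upwards with n
      have := (hm (j n)).1
      simp only [Set.mem_compl_iff, Set.mem_singleton_iff]
      intro h
      nlinarith
  have hlog : Tendsto (fun n : ℕ => Real.log (1 - m (j n)) / ((1 - m (j n)) - 1)) atTop
      (nhds 1) := hslope.comp hy
  have hnlog : Tendsto (fun n : ℕ => (n:ℝ) * Real.log (1 - m (j n))) atTop
      (nhds (-(c * u ^ (-α)))) := by
    have h2 : Tendsto (fun n : ℕ =>
        ((n:ℝ) * m (j n)) * (Real.log (1 - m (j n)) / ((1 - m (j n)) - 1)) * (-1)) atTop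
        (nhds ((c * u ^ (-α)) * 1 * (-1))) := (hnm.mul hlog).mul_const (-1)
    rw [mul_one, mul_neg_one] at h2
    refine h2.congr fun n => ?_
    have hne : m (j n) ≠ 0 := ne_of_gt (hm (j n)).1
    have : (1 - m (j n)) - 1 = -(m (j n)) := by ring
    rw [this]
    field_simp
  have hexp := (Real.continuous_exp.tendsto _).comp hnlog
  refine hexp.congr fun n => ?_
  have hpos : 0 < 1 - m (j n) := by have := (hm (j n)).2; linarith
  simp only [Function.comp_apply]
  rw [Real.exp_nat_mul, Real.exp_log hpos]

private lemma stmt17_bound {α c : ℝ} (hα : 1 < α) (hc : 0 < c) {m : ℕ → ℝ}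
    (hm : ∀ j, m j ∈ Set.Ioo (0 : ℝ) 1)
    (hlim : Tendsto (fun j : ℕ => (j : ℝ) ^ α * m j) atTop (nhds c)) :
    ∃ C : ℝ, c + 1 ≤ C ∧ ∀ j : ℕ, m j ≤ C * ((j:ℝ) + 1) ^ (-α) := by
  have hα0 : (0:ℝ) < α := lt_trans one_pos hα
  obtain ⟨J, hJ⟩ := (hlim.eventually (eventually_le_nhds (lt_add_one c))).exists_forall_of_atTop
  have h2α : (1:ℝ) ≤ (2:ℝ) ^ α := Real.one_le_rpow one_le_two hα0.le
  refine ⟨max ((c + 1) * 2 ^ α) (((J:ℝ) + 1) ^ α), ?_, ?_⟩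
  · calc c + 1 = (c+1) * 1 := by ring
      _ ≤ (c+1) * 2 ^ α := by nlinarith
      _ ≤ _ := le_max_left _ _
  intro j
  set C := max ((c + 1) * 2 ^ α) (((J:ℝ) + 1) ^ α) with hC
  have hjpos : (0:ℝ) < (j:ℝ) + 1 := by positivity
  have hpowpos : (0:ℝ) < ((j:ℝ) + 1) ^ (-α) := Real.rpow_pos_of_pos hjpos _
  have hcancel : ((j:ℝ) + 1) ^ α * ((j:ℝ) + 1) ^ (-α) = 1 := by
    rw [← Real.rpow_add hjpos]; simp
  rcases le_or_gt (j:ℕ) J with hjJ | hjJ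
  · -- small j : use m j < 1 and (j+1)^α ≤ C
    have h1 : ((j:ℝ) + 1) ^ α ≤ C := by
      refine le_trans (Real.rpow_le_rpow hjpos.le ?_ hα0.le) (le_max_right _ _)
      have : (j:ℝ) ≤ (J:ℝ) := by exact_mod_cast hjJ
      linarith
    have : (1:ℝ) ≤ C * ((j:ℝ) + 1) ^ (-α) := by
      calc (1:ℝ) = ((j:ℝ) + 1) ^ α * ((j:ℝ) + 1) ^ (-α) := hcancel.symm
        _ ≤ C * ((j:ℝ) + 1) ^ (-α) := by
            exact mul_le_mul_of_nonneg_right h1 hpowpos.le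
    exact le_trans (hm j).2.le this
  · -- large j
    have hj1 : 1 ≤ j := le_trans (Nat.succ_le_succ (Nat.zero_le J)) hjJ
    have hjr : (1:ℝ) ≤ (j:ℝ) := by exact_mod_cast hj1
    have hjr0 : (0:ℝ) < (j:ℝ) := by linarith
    have hle : ((j:ℝ))^α * m j ≤ c + 1 := hJ j (le_of_lt hjJ)
    have hmj : m j ≤ (c + 1) * ((j:ℝ)) ^ (-α) := by
      have hcc : ((j:ℝ))^α * ((j:ℝ))^(-α) = 1 := by rw [← Real.rpow_add hjr0]; simp
      calc m j = ((j:ℝ))^α * m j * ((j:ℝ))^(-α) := by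
            rw [mul_comm (((j:ℝ))^α) (m j), mul_assoc, hcc, mul_one]
        _ ≤ (c + 1) * ((j:ℝ))^(-α) :=
            mul_le_mul_of_nonneg_right hle (Real.rpow_pos_of_pos hjr0 _).le
    have hj2 : ((j:ℝ)) ^ (-α) ≤ 2 ^ α * ((j:ℝ) + 1) ^ (-α) := by
      have h21 : ((2:ℝ) * j) ^ (-α) ≤ ((j:ℝ) + 1) ^ (-α) :=
        Real.rpow_le_rpow_of_nonpos hjpos (by linarith) (by linarith)
      have h22 : ((2:ℝ) * j) ^ (-α) = 2 ^ (-α) * ((j:ℝ)) ^ (-α) :=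
        Real.mul_rpow (by norm_num) hjr0.le
      have h23 : (2:ℝ) ^ α * (2:ℝ) ^ (-α) = 1 := by rw [← Real.rpow_add two_pos]; simp
      calc ((j:ℝ)) ^ (-α) = 2 ^ α * (((2:ℝ)) ^ (-α) * ((j:ℝ)) ^ (-α)) := by
            rw [← mul_assoc, h23, one_mul]
        _ = 2 ^ α * ((2:ℝ) * j) ^ (-α) := by rw [h22]
        _ ≤ 2 ^ α * ((j:ℝ) + 1) ^ (-α) := by
            exact mul_le_mul_of_nonneg_left h21 (by positivity)
    calc m j ≤ (c + 1) * ((j:ℝ)) ^ (-α) := hmj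
      _ ≤ (c + 1) * (2 ^ α * ((j:ℝ) + 1) ^ (-α)) :=
          mul_le_mul_of_nonneg_left hj2 (by linarith)
      _ = (c + 1) * 2 ^ α * ((j:ℝ) + 1) ^ (-α) := by ring
      _ ≤ C * ((j:ℝ) + 1) ^ (-α) :=
          mul_le_mul_of_nonneg_right (le_max_left _ _) hpowpos.le

private lemma stmt17_iUnion : Set.Ici (0:ℝ) = ⋃ j : ℕ, Set.Ico (j:ℝ) ((j:ℝ) + 1) := by
  ext x
  simp only [Set.mem_Ici, Set.mem_iUnion, Set.mem_Ico]
  constructor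
  · intro hx
    exact ⟨⌊x⌋₊, Nat.floor_le hx, Nat.lt_floor_add_one x⟩
  · rintro ⟨j, h1, _⟩
    exact le_trans (Nat.cast_nonneg j) h1

private lemma stmt17_disj : Pairwise (Function.onFun Disjoint
    (fun j : ℕ => Set.Ico (j:ℝ) ((j:ℝ) + 1))) := by
  intro i j hij
  rw [Function.onFun, Set.disjoint_left]
  rintro x ⟨hi1, hi2⟩ ⟨hj1, hj2⟩
  rcases lt_or_gt_of_ne hij with h | h
  · have : (i:ℝ) + 1 ≤ (j:ℝ) := by exact_mod_cast Nat.succ_le_of_lt h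
    linarith
  · have : (j:ℝ) + 1 ≤ (i:ℝ) := by exact_mod_cast Nat.succ_le_of_lt h
    linarith

private lemma stmt17_lintegral_floor (a : ℕ → ℝ) :
    ∫⁻ x in Set.Ioi (0:ℝ), ENNReal.ofReal (a ⌊x⌋₊) = ∑' j : ℕ, ENNReal.ofReal (a j) := by
  rw [setLIntegral_congr Ioi_ae_eq_Ici, stmt17_iUnion,
    lintegral_iUnion (fun j => measurableSet_Ico) stmt17_disj]
  congr 1
  ext j
  have hcongr : ∀ x ∈ Set.Ico (j:ℝ) ((j:ℝ)+1),
      ENNReal.ofReal (a ⌊x⌋₊) = ENNReal.ofReal (a j) := by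
    intro x hx
    rw [Nat.floor_eq_on_Ico j x hx]
  rw [setLIntegral_congr_fun measurableSet_Ico hcongr,
    setLIntegral_const, Real.volume_Ico]
  simp

private lemma stmt17_scale (g : ℝ → ℝ≥0∞) (hg : Measurable g) {t : ℝ} (ht : 0 < t) :
    ∫⁻ x in Set.Ioi (0:ℝ), g x
      = ENNReal.ofReal t * ∫⁻ u in Set.Ioi (0:ℝ), g (u * t) := by
  have hpre : (· * t) ⁻¹' (Set.Ioi (0:ℝ)) = Set.Ioi (0:ℝ) := by
    ext x
    simp only [Set.mem_preimage, Set.mem_Ioi]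
    constructor
    · intro h
      by_contra h'
      push_neg at h'
      nlinarith
    · intro h
      exact mul_pos h ht
  have hmap : Measure.map (· * t) (volume.restrict (Set.Ioi (0:ℝ)))
      = (ENNReal.ofReal t⁻¹) • (volume.restrict (Set.Ioi (0:ℝ))) := by
    nth_rewrite 1 [← hpre]
    rw [← Measure.restrict_map (measurable_mul_const t) measurableSet_Ioi,
      Real.map_volume_mul_right (ne_of_gt ht), abs_of_pos (inv_pos.mpr ht),
      Measure.restrict_smul]
  have h1 : ∫⁻ u in Set.Ioi (0:ℝ), g (u * t)
      = ∫⁻ x, g x ∂(Measure.map (· * t) (volume.restrict (Set.Ioi (0:ℝ)))) :=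
    (lintegral_map hg (measurable_mul_const t)).symm
  rw [h1, hmap, lintegral_smul_measure, smul_eq_mul, ← mul_assoc, ← ENNReal.ofReal_mul ht.le,
    mul_inv_cancel₀ (ne_of_gt ht), ENNReal.ofReal_one, one_mul]

/-- If `(m_j)` is nonincreasing with `0 < m_j < 1` and `j^α m_j → c` for `α > 1`,
then `n^{-1/α} ∑_j (1 - (1 - m_j)^n) → ∫_0^∞ (1 - exp(-c u^{-α})) du`;
in particular `∑_j (1 - (1 - m_j)^n) = Θ(n^{1/α})`. -/
theorem stmt_17 (α c : ℝ) (hα : 1 < α) (hc : 0 < c)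
    (m : ℕ → ℝ) (hmono : Antitone m) (hm : ∀ j, m j ∈ Set.Ioo (0 : ℝ) 1)
    (hlim : Tendsto (fun j : ℕ => (j : ℝ) ^ α * m j) atTop (nhds c)) :
    Tendsto
      (fun n : ℕ => (n : ℝ) ^ (-(1 / α)) * ∑' j : ℕ, (1 - (1 - m j) ^ n))
      atTop
      (nhds (∫ u in Set.Ioi (0 : ℝ), (1 - Real.exp (-c * u ^ (-α))))) ∧
    ∃ C₁ C₂ : ℝ, 0 < C₁ ∧ 0 < C₂ ∧ ∀ᶠ n : ℕ in atTop,
      C₁ * (n : ℝ) ^ (1 / α) ≤ (∑' j : ℕ, (1 - (1 - m j) ^ n)) ∧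
      (∑' j : ℕ, (1 - (1 - m j) ^ n)) ≤ C₂ * (n : ℝ) ^ (1 / α) := by
  have hα0 : (0:ℝ) < α := lt_trans one_pos hα
  obtain ⟨C, hC1, hCb⟩ := stmt17_bound hα hc hm hlim
  have hCpos : 0 < C := lt_of_lt_of_le (by linarith) hC1
  set μ : Measure ℝ := volume.restrict (Set.Ioi (0:ℝ)) with hμ
  -- notation
  set F : ℕ → ℝ → ℝ≥0∞ :=
    fun n u => ENNReal.ofReal (1 - (1 - m ⌊u * (n:ℝ) ^ (1/α)⌋₊) ^ n) with hF
  set flim : ℝ → ℝ≥0∞ :=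
    fun u => ENNReal.ofReal (1 - Real.exp (-c * u ^ (-α))) with hflim
  set G : ℝ → ℝ≥0∞ := fun u => ENNReal.ofReal (min 1 (C * u ^ (-α))) with hG
  -- basic facts about a n j := 1 - (1 - m j) ^ n
  have hm1 : ∀ j, (0:ℝ) ≤ 1 - m j := fun j => by have := (hm j).2; linarith
  have hm1' : ∀ j, 1 - m j ≤ 1 := fun j => by have := (hm j).1; linarith
  have ha_nonneg : ∀ n j, 0 ≤ 1 - (1 - m j) ^ n := fun n j => by
    have := pow_le_one₀ (hm1 j) (hm1' j) (n := n); linarith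
  have ha_le_nm : ∀ (n j : ℕ), 1 - (1 - m j) ^ n ≤ (n:ℝ) * m j := by
    intro n j
    have h := one_add_mul_le_pow (a := -(m j)) (by have := (hm j).2; linarith) n
    have h2 : (1 + -(m j)) = 1 - m j := by ring
    rw [h2] at h
    have h3 : (n:ℝ) * -(m j) = -((n:ℝ) * m j) := by ring
    rw [h3] at h
    linarith
  -- summability
  have hsum_base : Summable (fun j : ℕ => ((j:ℝ) + 1) ^ (-α)) := by
    have h1 : Summable (fun j : ℕ => ((j:ℝ)) ^ (-α)) :=
      Real.summable_nat_rpow.mpr (by linarith)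
    have h2 := (summable_nat_add_iff 1).mpr h1
    refine h2.congr fun j => ?_
    push_cast
    norm_num
  have hsummable : ∀ n : ℕ, Summable (fun j => 1 - (1 - m j) ^ n) := by
    intro n
    refine Summable.of_nonneg_of_le (ha_nonneg n) (fun j => ?_)
      (hsum_base.mul_left ((n:ℝ) * C))
    calc 1 - (1 - m j) ^ n ≤ (n:ℝ) * m j := ha_le_nm n j
      _ ≤ (n:ℝ) * (C * ((j:ℝ) + 1) ^ (-α)) :=
          mul_le_mul_of_nonneg_left (hCb j) (Nat.cast_nonneg n)
      _ = (n:ℝ) * C * ((j:ℝ) + 1) ^ (-α) := by ring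
  -- measurability
  have hFmeas : ∀ n : ℕ, Measurable (F n) := by
    intro n
    exact ENNReal.measurable_ofReal.comp <| measurable_const.sub <|
      ((measurable_from_top.comp ((measurable_mul_const _).nat_floor)).const_sub 1).pow_const n
  -- key identity
  have key : ∀ n : ℕ, 1 ≤ n →
      (n:ℝ) ^ (-(1/α)) * (∑' j : ℕ, (1 - (1 - m j) ^ n)) = (∫⁻ u, F n u ∂μ).toReal := by
    intro n hn
    have hn0 : (0:ℝ) < (n:ℝ) := by exact_mod_cast hn
    have htpos : (0:ℝ) < (n:ℝ) ^ (1/α) := Real.rpow_pos_of_pos hn0 _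
    have hmeas' : Measurable (fun x : ℝ => ENNReal.ofReal (1 - (1 - m ⌊x⌋₊) ^ n)) :=
      ENNReal.measurable_ofReal.comp <| measurable_const.sub <|
        ((measurable_from_top.comp measurable_id.nat_floor).const_sub 1).pow_const n
    have h1 : ENNReal.ofReal (∑' j : ℕ, (1 - (1 - m j) ^ n))
        = ∑' j : ℕ, ENNReal.ofReal (1 - (1 - m j) ^ n) :=
      ENNReal.ofReal_tsum_of_nonneg (ha_nonneg n) (hsummable n)
    have h2 := stmt17_lintegral_floor (fun j => 1 - (1 - m j) ^ n)
    have h3 : (∫⁻ x in Set.Ioi (0:ℝ), ENNReal.ofReal (1 - (1 - m ⌊x⌋₊) ^ n))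
        = ENNReal.ofReal ((n:ℝ)^(1/α)) * ∫⁻ u, F n u ∂μ :=
      stmt17_scale (fun x => ENNReal.ofReal (1 - (1 - m ⌊x⌋₊) ^ n)) hmeas' htpos
    have hts : (∑' j : ℕ, (1 - (1 - m j) ^ n))
        = (ENNReal.ofReal ((n:ℝ)^(1/α)) * ∫⁻ u, F n u ∂μ).toReal := by
      rw [← h3, h2, ← h1, ENNReal.toReal_ofReal (tsum_nonneg (fun j => ha_nonneg n j))]
    rw [hts, ENNReal.toReal_mul, ENNReal.toReal_ofReal htpos.le, ← mul_assoc]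
    have hcc : (n:ℝ) ^ (-(1/α)) * (n:ℝ) ^ (1/α) = 1 := by
      rw [← Real.rpow_add hn0]; simp
    rw [hcc, one_mul]
  -- domination
  have h_bound : ∀ n : ℕ, ∀ᵐ u ∂μ, F n u ≤ G u := by
    intro n
    rw [hμ, ae_restrict_iff' measurableSet_Ioi]
    refine Filter.Eventually.of_forall fun u hu => ?_
    have hu0 : (0:ℝ) < u := hu
    have hua : (0:ℝ) < u ^ (-α) := Real.rpow_pos_of_pos hu0 _
    rcases Nat.eq_zero_or_pos n with rfl | hn
    · simp only [hF, pow_zero, sub_self, ENNReal.ofReal_zero]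
      exact zero_le
    have hn0 : (0:ℝ) < (n:ℝ) := by exact_mod_cast hn
    have htpos : (0:ℝ) < (n:ℝ) ^ (1/α) := Real.rpow_pos_of_pos hn0 _
    apply ENNReal.ofReal_le_ofReal
    set j : ℕ := ⌊u * (n:ℝ) ^ (1/α)⌋₊ with hj
    refine le_min ?_ ?_
    · have := pow_nonneg (hm1 j) n; linarith
    · have hstep1 : 1 - (1 - m j) ^ n ≤ (n:ℝ) * m j := ha_le_nm n j
      have hutpos : (0:ℝ) < u * (n:ℝ) ^ (1/α) := mul_pos hu0 htpos
      have hflo : u * (n:ℝ) ^ (1/α) ≤ (j:ℝ) + 1 := (Nat.lt_floor_add_one _).le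
      have hstep2 : ((j:ℝ) + 1) ^ (-α) ≤ (u * (n:ℝ) ^ (1/α)) ^ (-α) :=
        Real.rpow_le_rpow_of_nonpos hutpos hflo (by linarith)
      have hstep3 : (u * (n:ℝ) ^ (1/α)) ^ (-α) = u ^ (-α) * ((n:ℝ))⁻¹ := by
        have h2 : ((n:ℝ) ^ (1/α)) ^ (-α) = ((n:ℝ))⁻¹ := by
          rw [← Real.rpow_mul (Nat.cast_nonneg n)]
          have hee : (1/α) * (-α) = -1 := by field_simp
          rw [hee, Real.rpow_neg_one]
        rw [Real.mul_rpow hu0.le (Real.rpow_nonneg (Nat.cast_nonneg n) _), h2]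
      calc 1 - (1 - m j) ^ n ≤ (n:ℝ) * m j := hstep1
        _ ≤ (n:ℝ) * (C * ((j:ℝ) + 1) ^ (-α)) :=
            mul_le_mul_of_nonneg_left (hCb j) (Nat.cast_nonneg n)
        _ ≤ (n:ℝ) * (C * (u ^ (-α) * ((n:ℝ))⁻¹)) := by
            rw [← hstep3]
            exact mul_le_mul_of_nonneg_left
              (mul_le_mul_of_nonneg_left hstep2 hCpos.le) (Nat.cast_nonneg n)
        _ = C * u ^ (-α) := by
            field_simp
  -- the dominating function is integrable
  have hG_int : ∫⁻ u, G u ∂μ ≠ ⊤ := by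
    have hsplit : Set.Ioi (0:ℝ) = Set.Ioc 0 1 ∪ Set.Ioi 1 :=
      (Set.Ioc_union_Ioi_eq_Ioi zero_le_one).symm
    rw [hμ, hsplit, lintegral_union measurableSet_Ioi (Set.Ioc_disjoint_Ioi le_rfl)]
    have hA : ∫⁻ u in Set.Ioc (0:ℝ) 1, G u ≤ 1 := by
      calc ∫⁻ u in Set.Ioc (0:ℝ) 1, G u ≤ ∫⁻ _ in Set.Ioc (0:ℝ) 1, 1 := by
            refine lintegral_mono fun u => ?_
            refine le_trans (ENNReal.ofReal_le_ofReal (min_le_left _ _)) ?_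
            simp
        _ = volume (Set.Ioc (0:ℝ) 1) := setLIntegral_one _
        _ = 1 := by simp [Real.volume_Ioc]
    have hint : IntegrableOn (fun u : ℝ => C * u ^ (-α)) (Set.Ioi 1) :=
      (integrableOn_Ioi_rpow_of_lt (by linarith) one_pos).const_mul C
    have hB : ∫⁻ u in Set.Ioi (1:ℝ), G u < ⊤ := by
      calc ∫⁻ u in Set.Ioi (1:ℝ), G u
          ≤ ∫⁻ u in Set.Ioi (1:ℝ), (‖C * u ^ (-α)‖₊ : ℝ≥0∞) := by
            refine lintegral_mono fun u => ?_
            exact le_trans (ENNReal.ofReal_le_ofReal (min_le_right _ _))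
              (Real.ofReal_le_enorm _)
        _ < ⊤ := hint.2
    exact ENNReal.add_ne_top.mpr ⟨ne_top_of_le_ne_top ENNReal.one_ne_top hA, hB.ne⟩
  -- a.e. convergence
  have hconv : ∀ᵐ u ∂μ, Tendsto (fun n : ℕ => F n u) atTop (nhds (flim u)) := by
    rw [hμ, ae_restrict_iff' measurableSet_Ioi]
    refine Filter.Eventually.of_forall fun u hu => ?_
    have hu0 : (0:ℝ) < u := hu
    have h1 := stmt17_pow hα hu0 hm hlim
    have h2 : Tendsto (fun n : ℕ => 1 - (1 - m ⌊u * (n:ℝ)^(1/α)⌋₊) ^ n) atTop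
        (nhds (1 - Real.exp (-c * u ^ (-α)))) := by
      have : -(c * u ^ (-α)) = -c * u ^ (-α) := by ring
      rw [← this]
      exact tendsto_const_nhds.sub h1
    exact (ENNReal.continuous_ofReal.tendsto _).comp h2
  -- dominated convergence
  have hDCT : Tendsto (fun n : ℕ => ∫⁻ u, F n u ∂μ) atTop (nhds (∫⁻ u, flim u ∂μ)) :=
    tendsto_lintegral_of_dominated_convergence G hFmeas h_bound hG_int hconv
  -- limit integral is finite
  have hle_ae : ∀ᵐ u ∂μ, flim u ≤ G u := by
    rw [hμ, ae_restrict_iff' measurableSet_Ioi]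
    refine Filter.Eventually.of_forall fun u hu => ?_
    have hu0 : (0:ℝ) < u := hu
    have hua : (0:ℝ) < u ^ (-α) := Real.rpow_pos_of_pos hu0 _
    apply ENNReal.ofReal_le_ofReal
    refine le_min ?_ ?_
    · have := Real.exp_nonneg (-c * u ^ (-α)); linarith
    · have h1 := Real.add_one_le_exp (-(c * u ^ (-α)))
      have h2 : -c * u ^ (-α) = -(c * u ^ (-α)) := by ring
      have h3 : c * u ^ (-α) ≤ C * u ^ (-α) :=
        mul_le_mul_of_nonneg_right (by linarith) hua.le
      rw [h2]
      linarith
  have hflim_fin : ∫⁻ u, flim u ∂μ ≠ ⊤ :=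
    ne_top_of_le_ne_top hG_int (lintegral_mono_ae hle_ae)
  -- nonnegativity of the real integrand
  have hnonneg : 0 ≤ᵐ[μ] fun u : ℝ => 1 - Real.exp (-c * u ^ (-α)) := by
    rw [hμ]
    refine (ae_restrict_iff' measurableSet_Ioi).mpr
      (Filter.Eventually.of_forall fun u hu => ?_)
    have hu0 : (0:ℝ) < u := hu
    have hua : (0:ℝ) < u ^ (-α) := Real.rpow_pos_of_pos hu0 _
    have : Real.exp (-c * u ^ (-α)) ≤ 1 := by
      rw [← Real.exp_zero]
      apply Real.exp_le_exp.mpr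
      nlinarith
    simp only [Pi.zero_apply]
    linarith
  -- a.e. strong measurability of the real integrand
  have hcont : ContinuousOn (fun u : ℝ => 1 - Real.exp (-c * u ^ (-α))) (Set.Ioi 0) := by
    have h1 : ContinuousOn (fun u : ℝ => u ^ (-α)) (Set.Ioi 0) := fun u hu =>
      (Real.continuousAt_rpow_const u (-α) (Or.inl (ne_of_gt hu))).continuousWithinAt
    exact continuousOn_const.sub
      (Real.continuous_exp.comp_continuousOn (continuousOn_const.mul h1))
  have hmeasR : AEStronglyMeasurable (fun u : ℝ => 1 - Real.exp (-c * u ^ (-α))) μ :=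
    hcont.aestronglyMeasurable measurableSet_Ioi
  -- identify the real integral with the lintegral
  have hIeq : (∫ u in Set.Ioi (0:ℝ), (1 - Real.exp (-c * u ^ (-α))))
      = (∫⁻ u, flim u ∂μ).toReal := by
    rw [← hμ, integral_eq_lintegral_of_nonneg_ae hnonneg hmeasR]
  -- Part 1
  have hpart1 : Tendsto
      (fun n : ℕ => (n : ℝ) ^ (-(1 / α)) * ∑' j : ℕ, (1 - (1 - m j) ^ n))
      atTop (nhds (∫ u in Set.Ioi (0 : ℝ), (1 - Real.exp (-c * u ^ (-α))))) := by
    rw [hIeq]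
    refine ((ENNReal.tendsto_toReal hflim_fin).comp hDCT).congr' ?_
    filter_upwards [eventually_ge_atTop 1] with n hn
    exact (key n hn).symm
  refine ⟨hpart1, ?_⟩
  -- positivity of the limit
  set L := ∫ u in Set.Ioi (0:ℝ), (1 - Real.exp (-c * u ^ (-α))) with hL
  have hLint : IntegrableOn (fun u : ℝ => 1 - Real.exp (-c * u ^ (-α))) (Set.Ioi 0) := by
    refine ⟨hmeasR, ?_⟩
    rw [hasFiniteIntegral_iff_ofReal hnonneg]
    exact lt_top_iff_ne_top.mpr hflim_fin
  have hLpos : 0 < L := by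
    rw [hL, setIntegral_pos_iff_support_of_nonneg_ae hnonneg hLint]
    have hsub : Set.Ioi (0:ℝ)
        ⊆ (Function.support fun u : ℝ => 1 - Real.exp (-c * u ^ (-α))) ∩ Set.Ioi 0 := by
      intro u hu
      have hu0 : (0:ℝ) < u := hu
      have hua : (0:ℝ) < u ^ (-α) := Real.rpow_pos_of_pos hu0 _
      refine ⟨?_, hu⟩
      have hlt : Real.exp (-c * u ^ (-α)) < 1 := by
        rw [Real.exp_lt_one_iff]
        nlinarith
      simp only [Function.mem_support]
      intro h
      nlinarith
    calc (0:ℝ≥0∞) < volume (Set.Ioi (0:ℝ)) := by simp [Real.volume_Ioi]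
      _ ≤ _ := measure_mono hsub
  refine ⟨L/2, L+1, by linarith, by linarith, ?_⟩
  have hmem : Set.Ioo (L/2) (L+1) ∈ nhds L :=
    isOpen_Ioo.mem_nhds ⟨by linarith, by linarith⟩
  filter_upwards [hpart1.eventually_mem hmem, eventually_ge_atTop 1] with n hn hn1
  have hn0 : (0:ℝ) < (n:ℝ) := by exact_mod_cast hn1
  have htpos : (0:ℝ) < (n:ℝ) ^ (1/α) := Real.rpow_pos_of_pos hn0 _
  have hS : (∑' j : ℕ, (1 - (1 - m j) ^ n))
      = (n:ℝ) ^ (1/α) * ((n:ℝ) ^ (-(1/α)) * ∑' j : ℕ, (1 - (1 - m j) ^ n)) := by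
    rw [← mul_assoc, ← Real.rpow_add hn0]
    simp
  obtain ⟨hlo, hhi⟩ := hn
  constructor
  · rw [hS]; nlinarith
  · rw [hS]; nlinarith
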